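/- arXiv:1804.05403 — 2 statements merged into one kernel-verified Lean document; each statement's English description precedes it below -/
import Mathlib

section
/- Let I = diag(λ₁,λ₂,λ₃) with λᵢ > 0 and suppose a* ∈ ℝ³ is an eigenvector of I with I a* = λ* a*, a* ≠ 0. If a ∈ ℝ³ satisfies a* × (I a) + a × (I a*) = 0, then a ∈ N(λ* − I), i.e., I a = λ* a. -/
open Matrix

/-- If `I a* = λ* a*` with `a* ≠ 0` and `a* × (I a) + a × (I a*) = 0`,
then `I a = λ* a`. -/
theorem stmt4 (lam : Fin 3 → ℝ) (hlam : ∀ i, 0 < lam i)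
    (lamstar : ℝ) (astar : Fin 3 → ℝ) (hastar : astar ≠ 0)
    (heig : (Matrix.diagonal lam).mulVec astar = lamstar • astar)
    (a : Fin 3 → ℝ)
    (h : crossProduct astar ((Matrix.diagonal lam).mulVec a)
        + crossProduct a ((Matrix.diagonal lam).mulVec astar) = 0) :
    (Matrix.diagonal lam).mulVec a = lamstar • a := by
  have h0 := congrFun h 0
  have h1 := congrFun h 1
  have h2 := congrFun h 2
  have e0 := congrFun heig 0
  have e1 := congrFun heig 1
  have e2 := congrFun heig 2
  simp [crossProduct, mulVec, diagonal, dotProduct, Fin.sum_univ_three] at h0 h1 h2 e0 e1 e2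
  obtain ⟨i0, hi0⟩ : ∃ i, astar i ≠ 0 := Function.ne_iff.mp hastar
  have key : ∀ j, (lam j - lamstar) * a j = 0 := by
    fin_cases i0
    · have hi0' : astar 0 ≠ 0 := hi0
      have hl0 : lam 0 = lamstar := e0.resolve_right hi0'
      intro j
      fin_cases j
      · show (lam 0 - lamstar) * a 0 = 0
        rw [hl0]; ring
      · show (lam 1 - lamstar) * a 1 = 0
        rcases e1 with hl1 | ha1
        · rw [hl1]; ring
        · have hz : (lam 1 - lamstar) * a 1 * astar 0 = 0 := by
            rw [hl0, ha1] at h2; linarith [h2]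
          rcases mul_eq_zero.mp hz with hz | hz
          · exact hz
          · exact absurd hz hi0'
      · show (lam 2 - lamstar) * a 2 = 0
        rcases e2 with hl2 | ha2
        · rw [hl2]; ring
        · have hz : (lam 2 - lamstar) * a 2 * astar 0 = 0 := by
            rw [hl0, ha2] at h1; linarith [h1]
          rcases mul_eq_zero.mp hz with hz | hz
          · exact hz
          · exact absurd hz hi0'
    · have hi0' : astar 1 ≠ 0 := hi0
      have hl1 : lam 1 = lamstar := e1.resolve_right hi0'
      intro j
      fin_cases j
      · show (lam 0 - lamstar) * a 0 = 0
        rcases e0 with hl0 | ha0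
        · rw [hl0]; ring
        · have hz : (lam 0 - lamstar) * a 0 * astar 1 = 0 := by
            rw [hl1, ha0] at h2; linarith [h2]
          rcases mul_eq_zero.mp hz with hz | hz
          · exact hz
          · exact absurd hz hi0'
      · show (lam 1 - lamstar) * a 1 = 0
        rw [hl1]; ring
      · show (lam 2 - lamstar) * a 2 = 0
        rcases e2 with hl2 | ha2
        · rw [hl2]; ring
        · have hz : (lam 2 - lamstar) * a 2 * astar 1 = 0 := by
            rw [hl1, ha2] at h0; linarith [h0]
          rcases mul_eq_zero.mp hz with hz | hz
          · exact hz
          · exact absurd hz hi0'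
    · have hi0' : astar 2 ≠ 0 := hi0
      have hl2 : lam 2 = lamstar := e2.resolve_right hi0'
      intro j
      fin_cases j
      · show (lam 0 - lamstar) * a 0 = 0
        rcases e0 with hl0 | ha0
        · rw [hl0]; ring
        · have hz : (lam 0 - lamstar) * a 0 * astar 2 = 0 := by
            rw [hl2, ha0] at h1; linarith [h1]
          rcases mul_eq_zero.mp hz with hz | hz
          · exact hz
          · exact absurd hz hi0'
      · show (lam 1 - lamstar) * a 1 = 0
        rcases e1 with hl1 | ha1
        · rw [hl1]; ring
        · have hz : (lam 1 - lamstar) * a 1 * astar 2 = 0 := by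
            rw [hl2, ha1] at h0; linarith [h0]
          rcases mul_eq_zero.mp hz with hz | hz
          · exact hz
          · exact absurd hz hi0'
      · show (lam 2 - lamstar) * a 2 = 0
        rw [hl2]; ring
  funext j
  show (Matrix.diagonal lam).mulVec a j = lamstar * a j
  simp only [mulVec_diagonal]
  linear_combination key j
end

section
/- Let z ∈ ℂ and a ∈ ℂ³, let I = diag(λ₁,λ₂,λ₃) with real λᵢ > 0, and let a* ∈ ℝ³ with I a* = λ* a*, a* ≠ 0. If z I a + a* × I a + (a − ω) × I a* = 0 for some ω ∈ ℂ³, then Re[ z (I a | ω)_{ℂ³} ] = (Re z) · λ*⁻¹ (I a | (λ* − I) ā)_{ℂ³}, where (·|·)_{ℂ³} is the Hermitian inner product. -/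
open Matrix Complex

set_option maxHeartbeats 1000000 in
/-- Key spectral identity: if `z I a + a* × I a + (a − ω) × I a* = 0` in `ℂ³`, with
`I = diag(λ)` positive, `I a* = λ* a*`, `a* ≠ 0` real, then
`Re[z (I a|ω)] = (Re z) λ*⁻¹ Re (I a|(λ* − I)a)` with the Hermitian inner product. -/
theorem stmt11 (lam : Fin 3 → ℝ) (hlam : ∀ i, 0 < lam i)
    (lamstar : ℝ) (astar : Fin 3 → ℝ) (hastar : astar ≠ 0)
    (heig : (Matrix.diagonal lam).mulVec astar = lamstar • astar)
    (z : ℂ) (a ω : Fin 3 → ℂ)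
    (heq : z • (Matrix.diagonal fun i => (lam i : ℂ)).mulVec a
        + (fun i => (astar i : ℂ)) ⨯₃ ((Matrix.diagonal fun i => (lam i : ℂ)).mulVec a)
        + (a - ω) ⨯₃ ((Matrix.diagonal fun i => (lam i : ℂ)).mulVec fun i => (astar i : ℂ))
        = 0) :
    (z * ((Matrix.diagonal fun i => (lam i : ℂ)).mulVec a ⬝ᵥ star ω)).re
      = z.re * lamstar⁻¹ *
        ((Matrix.diagonal fun i => (lam i : ℂ)).mulVec a ⬝ᵥ
          star ((lamstar : ℂ) • a - (Matrix.diagonal fun i => (lam i : ℂ)).mulVec a)).re := by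
  obtain ⟨j, hj⟩ : ∃ i, astar i ≠ 0 := by
    by_contra h; push_neg at h; exact hastar (funext h)
  have heig' : ∀ i, lam i * astar i = lamstar * astar i := by
    intro i
    simpa [Matrix.mulVec_diagonal] using congrFun heig i
  have hlsj : lam j = lamstar := mul_right_cancel₀ hj (heig' j)
  have hls : lamstar ≠ 0 := by rw [← hlsj]; exact (hlam j).ne'
  have hj2 : 0 < astar j * astar j := mul_self_pos.mpr hj
  have hS : (0:ℝ) < ∑ i, astar i ^ 2 :=
    Finset.sum_pos' (fun i _ => sq_nonneg _) ⟨j, Finset.mem_univ j, by nlinarith [hj2]⟩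
  rw [Fin.sum_univ_three] at hS
  have hSne : astar 0 ^ 2 + astar 1 ^ 2 + astar 2 ^ 2 ≠ 0 := hS.ne'
  have hC : ∀ i, (lam i : ℂ) * ((astar i : ℝ) : ℂ) = ((lamstar : ℝ) : ℂ) * ((astar i : ℝ) : ℂ) := by
    intro i; exact_mod_cast congrArg (fun r : ℝ => (r : ℂ)) (heig' i)
  have e0 := congrFun heq 0
  have e1 := congrFun heq 1
  have e2 := congrFun heq 2
  simp [cross_apply, Matrix.vecHead, Matrix.vecTail, Function.comp,
    Matrix.mulVec_diagonal] at e0 e1 e2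
  have E0 : z * ((lam 0 : ℂ) * a 0) + (((astar 1 : ℝ) : ℂ) * ((lam 2 : ℂ) * a 2) - ((astar 2 : ℝ) : ℂ) * ((lam 1 : ℂ) * a 1)) + ((lamstar : ℝ) : ℂ) * ((a 1 - ω 1) * ((astar 2 : ℝ) : ℂ) - (a 2 - ω 2) * ((astar 1 : ℝ) : ℂ)) = 0 := by
    linear_combination e0 - (a 1 - ω 1) * hC 2 + (a 2 - ω 2) * hC 1
  have E1 : z * ((lam 1 : ℂ) * a 1) + (((astar 2 : ℝ) : ℂ) * ((lam 0 : ℂ) * a 0) - ((astar 0 : ℝ) : ℂ) * ((lam 2 : ℂ) * a 2)) + ((lamstar : ℝ) : ℂ) * ((a 2 - ω 2) * ((astar 0 : ℝ) : ℂ) - (a 0 - ω 0) * ((astar 2 : ℝ) : ℂ)) = 0 := by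
    linear_combination e1 - (a 2 - ω 2) * hC 0 + (a 0 - ω 0) * hC 2
  have E2 : z * ((lam 2 : ℂ) * a 2) + (((astar 0 : ℝ) : ℂ) * ((lam 1 : ℂ) * a 1) - ((astar 1 : ℝ) : ℂ) * ((lam 0 : ℂ) * a 0)) + ((lamstar : ℝ) : ℂ) * ((a 0 - ω 0) * ((astar 1 : ℝ) : ℂ) - (a 1 - ω 1) * ((astar 0 : ℝ) : ℂ)) = 0 := by
    linear_combination e2 - (a 0 - ω 0) * hC 1 + (a 1 - ω 1) * hC 0
  have cE0 : (starRingEnd ℂ) z * ((lam 0 : ℂ) * (starRingEnd ℂ) (a 0)) + (((astar 1 : ℝ) : ℂ) * ((lam 2 : ℂ) * (starRingEnd ℂ) (a 2)) - ((astar 2 : ℝ) : ℂ) * ((lam 1 : ℂ) * (starRingEnd ℂ) (a 1))) + ((lamstar : ℝ) : ℂ) * ((((starRingEnd ℂ) (a 1)) - ((starRingEnd ℂ) (ω 1))) * ((astar 2 : ℝ) : ℂ) - (((starRingEnd ℂ) (a 2)) - ((starRingEnd ℂ) (ω 2))) * ((astar 1 : ℝ) : ℂ)) = 0 := by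
    have h := congrArg (starRingEnd ℂ) E0
    simp only [map_add, map_sub, _root_.map_mul, map_zero, Complex.conj_ofReal] at h
    linear_combination h
  have cE1 : (starRingEnd ℂ) z * ((lam 1 : ℂ) * (starRingEnd ℂ) (a 1)) + (((astar 2 : ℝ) : ℂ) * ((lam 0 : ℂ) * (starRingEnd ℂ) (a 0)) - ((astar 0 : ℝ) : ℂ) * ((lam 2 : ℂ) * (starRingEnd ℂ) (a 2))) + ((lamstar : ℝ) : ℂ) * ((((starRingEnd ℂ) (a 2)) - ((starRingEnd ℂ) (ω 2))) * ((astar 0 : ℝ) : ℂ) - (((starRingEnd ℂ) (a 0)) - ((starRingEnd ℂ) (ω 0))) * ((astar 2 : ℝ) : ℂ)) = 0 := by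
    have h := congrArg (starRingEnd ℂ) E1
    simp only [map_add, map_sub, _root_.map_mul, map_zero, Complex.conj_ofReal] at h
    linear_combination h
  have cE2 : (starRingEnd ℂ) z * ((lam 2 : ℂ) * (starRingEnd ℂ) (a 2)) + (((astar 0 : ℝ) : ℂ) * ((lam 1 : ℂ) * (starRingEnd ℂ) (a 1)) - ((astar 1 : ℝ) : ℂ) * ((lam 0 : ℂ) * (starRingEnd ℂ) (a 0))) + ((lamstar : ℝ) : ℂ) * ((((starRingEnd ℂ) (a 0)) - ((starRingEnd ℂ) (ω 0))) * ((astar 1 : ℝ) : ℂ) - (((starRingEnd ℂ) (a 1)) - ((starRingEnd ℂ) (ω 1))) * ((astar 0 : ℝ) : ℂ)) = 0 := by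
    have h := congrArg (starRingEnd ℂ) E2
    simp only [map_add, map_sub, _root_.map_mul, map_zero, Complex.conj_ofReal] at h
    linear_combination h
  have key : ((lamstar : ℝ) : ℂ) * (((astar 0 : ℝ) : ℂ) * ((astar 0 : ℝ) : ℂ) + ((astar 1 : ℝ) : ℂ) * ((astar 1 : ℝ) : ℂ) + ((astar 2 : ℝ) : ℂ) * ((astar 2 : ℝ) : ℂ)) * (z * (((lam 0 : ℂ) * a 0) * ((starRingEnd ℂ) (ω 0)) + ((lam 1 : ℂ) * a 1) * ((starRingEnd ℂ) (ω 1)) + ((lam 2 : ℂ) * a 2) * ((starRingEnd ℂ) (ω 2)))) = z * (starRingEnd ℂ) z * (((lam 0 : ℂ) * a 0) * (((astar 1 : ℝ) : ℂ) * ((lam 2 : ℂ) * (starRingEnd ℂ) (a 2)) - ((astar 2 : ℝ) : ℂ) * ((lam 1 : ℂ) * (starRingEnd ℂ) (a 1))) + ((lam 1 : ℂ) * a 1) * (((astar 2 : ℝ) : ℂ) * ((lam 0 : ℂ) * (starRingEnd ℂ) (a 0)) - ((astar 0 : ℝ) : ℂ) * ((lam 2 : ℂ) * (starRingEnd ℂ)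 (a 2))) + ((lam 2 : ℂ) * a 2) * (((astar 0 : ℝ) : ℂ) * ((lam 1 : ℂ) * (starRingEnd ℂ) (a 1)) - ((astar 1 : ℝ) : ℂ) * ((lam 0 : ℂ) * (starRingEnd ℂ) (a 0)))) + ((lamstar : ℝ) : ℂ) * (((astar 0 : ℝ) : ℂ) * ((astar 0 : ℝ) : ℂ) + ((astar 1 : ℝ) : ℂ) * ((astar 1 : ℝ) : ℂ) + ((astar 2 : ℝ) : ℂ) * ((astar 2 : ℝ) : ℂ)) * (z * (((lam 0 : ℂ) * a 0) * ((starRingEnd ℂ) (a 0)) + ((lam 1 : ℂ) * a 1) * ((starRingEnd ℂ) (a 1)) + ((lam 2 : ℂ) * a 2) * ((starRingEnd ℂ) (a 2)))) - (((astar 0 : ℝ) : ℂ) * ((astar 0 : ℝ) : ℂ) + ((astar 1 : ℝ) : ℂ) * ((astar 1 : ℝ) : ℂ) + ((astar 2 : ℝ) : ℂ) * ((astar 2 : ℝ) : ℂ)) * (z * (((lam 0 : ℂ) * a 0) * ((lam 0 : ℂ) * (starRingEnd ℂ) (a 0)) + ((lam 1 : ℂ) * a 1) * ((lam 1 : ℂ)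 * (starRingEnd ℂ) (a 1)) + ((lam 2 : ℂ) * a 2) * ((lam 2 : ℂ) * (starRingEnd ℂ) (a 2)))) := by
    linear_combination (-(z * (((lam 1 : ℂ) * a 1) * ((astar 2 : ℝ) : ℂ) - ((lam 2 : ℂ) * a 2) * ((astar 1 : ℝ) : ℂ))) ) * cE0 + (-(z * (((lam 2 : ℂ) * a 2) * ((astar 0 : ℝ) : ℂ) - ((lam 0 : ℂ) * a 0) * ((astar 2 : ℝ) : ℂ)))) * cE1 + (-(z * (((lam 0 : ℂ) * a 0) * ((astar 1 : ℝ) : ℂ) - ((lam 1 : ℂ) * a 1) * ((astar 0 : ℝ) : ℂ)))) * cE2 + ((((astar 0 : ℝ) : ℂ) * ((lam 0 : ℂ) * (starRingEnd ℂ) (a 0)) + ((astar 1 : ℝ) : ℂ) * ((lam 1 : ℂ) * (starRingEnd ℂ) (a 1)) + ((astar 2 : ℝ) : ℂ) * ((lam 2 : ℂ) * (starRingEnd ℂ) (a 2))) - ((lamstar : ℝ) : ℂ) * (((astar 0 : ℝ) : ℂ) * ((starRingEnd ℂ) (a 0)) + ((astar 1 : ℝ) : ℂ) * ((starRingEnd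 ℂ) (a 1)) + ((astar 2 : ℝ) : ℂ) * ((starRingEnd ℂ) (a 2))) + ((lamstar : ℝ) : ℂ) * (((astar 0 : ℝ) : ℂ) * ((starRingEnd ℂ) (ω 0)) + ((astar 1 : ℝ) : ℂ) * ((starRingEnd ℂ) (ω 1)) + ((astar 2 : ℝ) : ℂ) * ((starRingEnd ℂ) (ω 2)))) * (((astar 0 : ℝ) : ℂ) * E0 + ((astar 1 : ℝ) : ℂ) * E1 + ((astar 2 : ℝ) : ℂ) * E2)
  have hre := congrArg Complex.re key
  simp only [Complex.add_re, Complex.add_im, Complex.sub_re, Complex.sub_im, Complex.mul_re,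
    Complex.mul_im, Complex.ofReal_re, Complex.ofReal_im, Complex.conj_re, Complex.conj_im,
    Complex.neg_re, Complex.neg_im] at hre
  simp only [dotProduct, Fin.sum_univ_three, Matrix.mulVec_diagonal, Pi.star_apply,
    Pi.smul_apply, Pi.sub_apply, smul_eq_mul, Complex.star_def, Complex.add_re, Complex.add_im,
    Complex.sub_re, Complex.sub_im, Complex.mul_re, Complex.mul_im, Complex.ofReal_re,
    Complex.ofReal_im, Complex.conj_re, Complex.conj_im, Complex.neg_re, Complex.neg_im]
  field_simp
  refine mul_left_cancel₀ hSne ?_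
  linear_combination hre
end
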